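/- Let c ≥ 0 be a real number and let L_c : ℂ → ℂ be the ℝ-linear map L_c(z) = z + c·Im(z). Then L_c is an ℝ-linear automorphism of ℂ with inverse z ↦ z − c·Im(z), and the product of the operator norms of L_c and of its inverse equals ((c + √(c² + 4))/2)², which equals (√(c² + 4) + c)/(√(c² + 4) − c). -/

import Mathlib

private lemma shear_opNorm (c ε : ℝ) (hc : 0 ≤ c) (hε : ε = 1 ∨ ε = -1)
    (T : ℂ →L[ℝ] ℂ) (hT : ∀ z : ℂ, T z = z + (ε * c * z.im : ℝ)) :
    ‖T‖ = (c + Real.sqrt (c ^ 2 + 4)) / 2 := by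
  set q := Real.sqrt (c ^ 2 + 4) with hq
  have hq2 : q ^ 2 = c ^ 2 + 4 := Real.sq_sqrt (by positivity)
  have hqc : c < q := by nlinarith [Real.sqrt_nonneg (c ^ 2 + 4)]
  set s := (c + q) / 2 with hs
  have hs0 : 0 < s := by nlinarith
  have hss : s ^ 2 = c * s + 1 := by
    have : (c + q) ^ 2 = c * (2 * (c + q)) + 4 := by nlinarith
    field_simp [hs]; nlinarith
  have hε2 : ε ^ 2 = 1 := by rcases hε with h | h <;> simp [h]
  have hre : ∀ z : ℂ, (T z).re = z.re + ε * c * z.im := by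
    intro z; rw [hT]; simp
  have him : ∀ z : ℂ, (T z).im = z.im := by
    intro z; rw [hT]; simp
  have hnorm_sq : ∀ w : ℂ, ‖w‖ ^ 2 = w.re ^ 2 + w.im ^ 2 := by
    intro w
    rw [Complex.sq_norm, Complex.normSq_apply]; ring
  apply le_antisymm
  · apply ContinuousLinearMap.opNorm_le_bound _ hs0.le
    intro z
    have h1 : ‖T z‖ ^ 2 ≤ (s * ‖z‖) ^ 2 := by
      rw [hnorm_sq, mul_pow, hnorm_sq, hre, him]
      have key : s * ((s ^ 2 * (z.re ^ 2 + z.im ^ 2)) -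
          ((z.re + ε * c * z.im) ^ 2 + z.im ^ 2)) = c * (s * z.re - ε * z.im) ^ 2 := by
        linear_combination (s * z.re ^ 2 + s * z.im ^ 2 + c * z.im ^ 2) * hss -
          (c ^ 2 * s * z.im ^ 2 + c * z.im ^ 2) * hε2
      nlinarith [key, mul_nonneg hc (sq_nonneg (s * z.re - ε * z.im)), hs0]
    have h2 : 0 ≤ s * ‖z‖ := by positivity
    nlinarith [norm_nonneg (T z)]
  · have hz0 : ‖T (⟨1, ε * s⟩ : ℂ)‖ = s * ‖(⟨1, ε * s⟩ : ℂ)‖ := by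
      have e1 : ‖T (⟨1, ε * s⟩ : ℂ)‖ ^ 2 = (s * ‖(⟨1, ε * s⟩ : ℂ)‖) ^ 2 := by
        rw [hnorm_sq, mul_pow, hnorm_sq, hre, him]
        have e2 : (⟨1, ε * s⟩ : ℂ).re = 1 := rfl
        have e3 : (⟨1, ε * s⟩ : ℂ).im = ε * s := rfl
        rw [e2, e3]
        rcases hε with rfl | rfl <;> nlinarith [hss]
      have h2 : 0 ≤ s * ‖(⟨1, ε * s⟩ : ℂ)‖ := by positivity
      nlinarith [norm_nonneg (T (⟨1, ε * s⟩ : ℂ))]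
    have hzpos : 0 < ‖(⟨1, ε * s⟩ : ℂ)‖ := by
      rw [norm_pos_iff]
      intro h
      have := congrArg Complex.re h
      simp at this
    have := T.le_opNorm (⟨1, ε * s⟩ : ℂ)
    rw [hz0] at this
    exact le_of_mul_le_mul_right (by linarith) hzpos

/-- The shear map `L_c(z) = z + c·Im(z)` is an `ℝ`-linear automorphism of `ℂ` with inverse
`z ↦ z - c·Im(z)`, and the product of the operator norms of `L_c` and its inverse equals
`((c + √(c² + 4))/2)²`, which equals `(√(c² + 4) + c)/(√(c² + 4) - c)`. -/
theorem shear_map_dilatation (c : ℝ) (hc : 0 ≤ c) (L M : ℂ →L[ℝ] ℂ)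
    (hL : ∀ z : ℂ, L z = z + (c * z.im : ℝ))
    (hM : ∀ z : ℂ, M z = z - (c * z.im : ℝ)) :
    (∀ z : ℂ, M (L z) = z) ∧ (∀ z : ℂ, L (M z) = z) ∧
    ‖L‖ * ‖M‖ = ((c + Real.sqrt (c ^ 2 + 4)) / 2) ^ 2 ∧
    ((c + Real.sqrt (c ^ 2 + 4)) / 2) ^ 2
      = (Real.sqrt (c ^ 2 + 4) + c) / (Real.sqrt (c ^ 2 + 4) - c) := by
  have hq2 : Real.sqrt (c ^ 2 + 4) ^ 2 = c ^ 2 + 4 := Real.sq_sqrt (by positivity)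
  have hqc : c < Real.sqrt (c ^ 2 + 4) := by
    nlinarith [Real.sqrt_nonneg (c ^ 2 + 4)]
  have hLnorm : ‖L‖ = (c + Real.sqrt (c ^ 2 + 4)) / 2 := by
    apply shear_opNorm c 1 hc (Or.inl rfl)
    intro z; rw [hL]; ring_nf
  have hMnorm : ‖M‖ = (c + Real.sqrt (c ^ 2 + 4)) / 2 := by
    apply shear_opNorm c (-1) hc (Or.inr rfl)
    intro z; rw [hM]; push_cast; ring
  refine ⟨?_, ?_, ?_, ?_⟩
  · intro z
    rw [hL, hM]
    simp [Complex.ext_iff]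
  · intro z
    rw [hM, hL]
    simp [Complex.ext_iff]
  · rw [hLnorm, hMnorm]; ring
  · rw [eq_div_iff (by linarith)]
    nlinarith
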